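/- arXiv:1304.0519 — 3 statements merged into one kernel-verified Lean document; each statement's English description precedes it below -/
import Mathlib

section
/- Let θ be irrational, P ∈ SL(2,ℝ), and A ∈ SL(2,ℝ). Set B = P R_θ P⁻¹ (R_θ rotation by 2πθ). Then there exists k ≥ 1 such that B^k A is elliptic, i.e., |tr(B^k A)| < 2. -/
open Matrix Real

noncomputable def Rot (θ : ℝ) : Matrix (Fin 2) (Fin 2) ℝ :=
  !![Real.cos (2 * π * θ), -Real.sin (2 * π * θ);
     Real.sin (2 * π * θ),  Real.cos (2 * π * θ)]

lemma Rot_add (a b : ℝ) : Rot (a + b) = Rot a * Rot b := by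
  have h : 2 * π * (a + b) = 2 * π * a + 2 * π * b := by ring
  ext i j
  fin_cases i <;> fin_cases j <;>
    simp [Rot, Matrix.mul_apply, Fin.sum_univ_two, h, Real.cos_add, Real.sin_add] <;> ring

lemma Rot_pow (θ : ℝ) (k : ℕ) : Rot θ ^ k = Rot (k * θ) := by
  induction k with
  | zero => simp [Rot, Matrix.one_fin_two]
  | succ n ih =>
      have h : ((n + 1 : ℕ) : ℝ) * θ = n * θ + θ := by push_cast; ring
      rw [pow_succ, ih, h, Rot_add]

lemma coe_mk' (x : ℝ) : ((x : ℝ) : AddCircle (1:ℝ))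
    = QuotientAddGroup.mk' (AddSubgroup.zmultiples (1:ℝ)) x := rfl

lemma coe_helper (θ : ℝ) (n m : ℤ) :
    ((n • θ + m • (1:ℝ) : ℝ) : AddCircle (1:ℝ)) = n • (θ : AddCircle (1:ℝ)) := by
  rw [coe_mk', map_add, map_zsmul, map_zsmul, ← coe_mk']
  have h1 : QuotientAddGroup.mk' (AddSubgroup.zmultiples (1:ℝ)) (1:ℝ) = 0 := by
    rw [QuotientAddGroup.mk'_apply, QuotientAddGroup.eq_zero_iff]
    exact AddSubgroup.mem_zmultiples 1
  rw [h1, smul_zero, add_zero]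

lemma coe_nsmul' (θ : ℝ) (k : ℕ) :
    ((k • θ : ℝ) : AddCircle (1:ℝ)) = k • (θ : AddCircle (1:ℝ)) := by
  rw [coe_mk', map_nsmul, ← coe_mk']

set_option maxHeartbeats 800000 in
lemma key_lemma (θ : ℝ) (hθ : Irrational θ) (t u : ℝ) :
    ∃ k : ℕ, 1 ≤ k ∧ |t * Real.cos (2 * π * (k * θ)) + u * Real.sin (2 * π * (k * θ))| < 2 := by
  set f : ℝ → ℝ := fun x => t * Real.cos (2 * π * x) + u * Real.sin (2 * π * x) with hf
  have hcont : Continuous f := by fun_prop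
  -- f has a zero
  have h0 : f 0 = t := by simp [hf]
  have hhalf : f (1 / 2) = -t := by
    have e : 2 * π * (1 / 2 : ℝ) = π := by ring
    simp only [hf]
    rw [e, Real.cos_pi, Real.sin_pi]
    ring
  obtain ⟨x0, -, hx0⟩ : ∃ x0 ∈ Set.uIcc (0 : ℝ) (1 / 2), f x0 = 0 := by
    have h := intermediate_value_uIcc (f := f) (a := (0:ℝ)) (b := 1/2) hcont.continuousOn
    have hmem : (0 : ℝ) ∈ Set.uIcc (f 0) (f (1 / 2)) := by
      rw [h0, hhalf]
      rcases le_total 0 t with h' | h'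
      · exact Set.mem_uIcc.mpr (Or.inr ⟨by linarith, h'⟩)
      · exact Set.mem_uIcc.mpr (Or.inl ⟨h', by linarith⟩)
    obtain ⟨x0, hx0m, hx0⟩ := h hmem
    exact ⟨x0, hx0m, hx0⟩
  -- periodicity
  have hper : ∀ (x : ℝ) (m : ℤ), f (x + m) = f x := by
    intro x m
    have e : 2 * π * (x + m) = 2 * π * x + m * (2 * π) := by ring
    simp only [hf, e, Real.cos_add_int_mul_two_pi, Real.sin_add_int_mul_two_pi]
  -- density of ℤ-orbit in AddCircle 1
  have hdZ : Dense (Set.range fun n : ℤ => n • ((θ : AddCircle (1 : ℝ)))) := by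
    set S : AddSubgroup ℝ := AddSubgroup.zmultiples θ ⊔ AddSubgroup.zmultiples (1 : ℝ) with hS
    have hdS : Dense (S : Set ℝ) := by
      rcases AddSubgroup.dense_or_cyclic S with h | ⟨a, ha⟩
      · exact h
      · exfalso
        have hθS : θ ∈ S := AddSubgroup.mem_sup_left (AddSubgroup.mem_zmultiples θ)
        have h1S : (1 : ℝ) ∈ S := AddSubgroup.mem_sup_right (AddSubgroup.mem_zmultiples 1)
        rw [ha, ← AddSubgroup.zmultiples_eq_closure] at hθS h1S
        obtain ⟨z1, hz1⟩ := AddSubgroup.mem_zmultiples_iff.mp hθS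
        obtain ⟨z2, hz2⟩ := AddSubgroup.mem_zmultiples_iff.mp h1S
        rw [zsmul_eq_mul] at hz1 hz2
        have hz2ne : (z2 : ℝ) ≠ 0 := by
          intro h
          rw [h, zero_mul] at hz2
          norm_num at hz2
        have hmul : θ * (z2 : ℝ) = (z1 : ℝ) := by
          calc θ * (z2 : ℝ) = ((z1 : ℝ) * a) * z2 := by rw [hz1]
            _ = (z1 : ℝ) * ((z2 : ℝ) * a) := by ring
            _ = (z1 : ℝ) := by rw [hz2, mul_one]
        have : θ = (z1 : ℝ) / (z2 : ℝ) := by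
          rw [eq_div_iff hz2ne]; exact hmul
        exact (irrational_iff_ne_rational θ).mp hθ z1 z2 (by exact_mod_cast hz2ne) this
    -- push forward to the circle
    have hsurj : DenseRange ((↑) : ℝ → AddCircle (1 : ℝ)) :=
      QuotientAddGroup.mk_surjective.denseRange
    have hcoe : Continuous ((↑) : ℝ → AddCircle (1 : ℝ)) := AddCircle.continuous_mk' 1
    have himg : Dense (((↑) : ℝ → AddCircle (1 : ℝ)) '' (S : Set ℝ)) :=
      hsurj.dense_image hcoe hdS
    have hrange : (((↑) : ℝ → AddCircle (1 : ℝ)) '' (S : Set ℝ)) ⊆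
        Set.range fun n : ℤ => n • ((θ : AddCircle (1 : ℝ))) := by
      rintro x ⟨s, hs, rfl⟩
      rw [SetLike.mem_coe, AddSubgroup.mem_sup] at hs
      obtain ⟨y, hy, z, hz, hyz⟩ := hs
      obtain ⟨n, rfl⟩ := AddSubgroup.mem_zmultiples_iff.mp hy
      obtain ⟨m, rfl⟩ := AddSubgroup.mem_zmultiples_iff.mp hz
      subst hyz
      exact ⟨n, (coe_helper θ n m).symm⟩
    exact himg.mono hrange
  -- pass to natural powers via compactness
  have hx0c : ((x0 : ℝ) : AddCircle (1 : ℝ)) ∈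
      closure (Set.range fun k : ℕ => k • ((θ : AddCircle (1 : ℝ)))) := by
    rw [← closure_range_zsmul_eq_nsmul]
    exact hdZ _
  have hmcp : MapClusterPt ((x0 : ℝ) : AddCircle (1 : ℝ)) Filter.atTop
      (fun k : ℕ => k • ((θ : AddCircle (1 : ℝ)))) :=
    ((mapClusterPt_atTop_nsmul_tfae ((x0 : ℝ) : AddCircle (1 : ℝ))
      ((θ : AddCircle (1 : ℝ)))).out 0 2).mpr hx0c
  -- open set around x0
  set U : Set ℝ := f ⁻¹' Set.Ioo (-2) 2 with hU
  have hUopen : IsOpen U := hcont.isOpen_preimage _ isOpen_Ioo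
  have hx0U : x0 ∈ U := by
    simp only [hU, Set.mem_preimage, hx0, Set.mem_Ioo]
    norm_num
  have hVopen : IsOpen (((↑) : ℝ → AddCircle (1 : ℝ)) '' U) :=
    QuotientAddGroup.isOpenMap_coe U hUopen
  have hx0V : ((x0 : ℝ) : AddCircle (1 : ℝ)) ∈ ((↑) : ℝ → AddCircle (1 : ℝ)) '' U :=
    ⟨x0, hx0U, rfl⟩
  have hfreq := (mapClusterPt_iff_frequently.mp hmcp) _ (hVopen.mem_nhds hx0V)
  obtain ⟨k, hk1, hkV⟩ := (Filter.frequently_atTop.mp hfreq) 1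
  obtain ⟨y, hyU, hy⟩ := hkV
  -- translate back to ℝ
  have hcoek : ((k * θ : ℝ) : AddCircle (1 : ℝ)) = k • ((θ : AddCircle (1 : ℝ))) := by
    rw [show ((k : ℝ) * θ) = (k • θ : ℝ) by rw [nsmul_eq_mul], coe_nsmul']
  have heq : ((y : ℝ) : AddCircle (1 : ℝ)) = ((k * θ : ℝ) : AddCircle (1 : ℝ)) := by
    rw [hy, hcoek]
  obtain ⟨m, hm⟩ := AddSubgroup.mem_zmultiples_iff.mp (QuotientAddGroup.eq.mp heq)
  have hkθ : (k : ℝ) * θ = y + m := by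
    rw [zsmul_eq_mul, mul_one] at hm
    linarith
  refine ⟨k, hk1, ?_⟩
  have : f ((k : ℝ) * θ) ∈ Set.Ioo (-2 : ℝ) 2 := by
    rw [hkθ, hper y m]
    exact hyU
  rw [abs_lt]
  exact ⟨this.1, this.2⟩

theorem stmt_3 (θ : ℝ) (hθ : Irrational θ)
    (P A : Matrix (Fin 2) (Fin 2) ℝ) (hP : P.det = 1) (hA : A.det = 1)
    (B : Matrix (Fin 2) (Fin 2) ℝ) (hB : B = P * Rot θ * P⁻¹) :
    ∃ k : ℕ, 1 ≤ k ∧ |(B ^ k * A).trace| < 2 := by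
  have hPu : IsUnit P.det := by rw [hP]; exact isUnit_one
  have hPP : P * P⁻¹ = 1 := Matrix.mul_nonsing_inv P hPu
  have hP'P : P⁻¹ * P = 1 := Matrix.nonsing_inv_mul P hPu
  set M : Matrix (Fin 2) (Fin 2) ℝ := P⁻¹ * A * P with hM
  have hBk : ∀ k : ℕ, B ^ k = P * Rot θ ^ k * P⁻¹ := by
    intro k
    induction k with
    | zero => simp [pow_zero, hPP]
    | succ n ih =>
        rw [pow_succ, ih, hB, pow_succ]
        calc P * Rot θ ^ n * P⁻¹ * (P * Rot θ * P⁻¹)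
            = P * Rot θ ^ n * (P⁻¹ * P) * Rot θ * P⁻¹ := by
              simp only [Matrix.mul_assoc]
          _ = P * (Rot θ ^ n * Rot θ) * P⁻¹ := by
              rw [hP'P]; simp only [Matrix.mul_assoc, Matrix.one_mul]
  have htr : ∀ k : ℕ, (B ^ k * A).trace = (Rot (k * θ) * M).trace := by
    intro k
    rw [hBk k, Rot_pow]
    calc (P * Rot (k * θ) * P⁻¹ * A).trace
        = ((P * Rot (k * θ)) * (P⁻¹ * A)).trace := by simp only [Matrix.mul_assoc]
      _ = ((P⁻¹ * A) * (P * Rot (k * θ))).trace := Matrix.trace_mul_comm _ _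
      _ = ((P⁻¹ * A * P) * Rot (k * θ)).trace := by simp only [Matrix.mul_assoc]
      _ = (Rot (k * θ) * M).trace := by rw [Matrix.trace_mul_comm, hM]
  have hform : ∀ x : ℝ, (Rot x * M).trace =
      (M 0 0 + M 1 1) * Real.cos (2 * π * x) + (M 0 1 - M 1 0) * Real.sin (2 * π * x) := by
    intro x
    rw [Matrix.trace_fin_two, Matrix.mul_apply, Matrix.mul_apply, Fin.sum_univ_two,
      Fin.sum_univ_two]
    simp [Rot]
    ring
  obtain ⟨k, hk1, hk⟩ := key_lemma θ hθ (M 0 0 + M 1 1) (M 0 1 - M 1 0)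
  exact ⟨k, hk1, by rw [htr k, hform]; exact hk⟩
end

section
/- Let α ∈ ℝᵈ be Diophantine: there are C, τ > 0 with ‖⟨k,α⟩‖_{ℝ/ℤ} ≥ C‖k‖^{-τ} for all nonzero k ∈ ℤᵈ. Then for the translation S_α on 𝕋ᵈ there exist constants C', N₀ such that for every γ ∈ (0,1), every x ∈ 𝕋ᵈ, and every ball B ⊂ 𝕋ᵈ of radius γ, there exists k with 0 ≤ k ≤ C' γ^{-C'} such that S_α^k(x) ∈ B. That is, Diophantine translation orbits become γ-dense in time polynomial in γ⁻¹. -/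
open Real Complex Finset

noncomputable section Aux13sec

namespace Aux13

def ee (t : ℝ) : ℂ := Complex.exp (((2 * π * t : ℝ) : ℂ) * Complex.I)

def dz (t : ℝ) : ℝ := |t - round t|

lemma norm_ee (t : ℝ) : ‖ee t‖ = 1 := by
  rw [ee, Complex.norm_exp_ofReal_mul_I]

lemma ee_pow (t : ℝ) (k : ℕ) : ee (k * t) = ee t ^ k := by
  rw [ee, ee, ← Complex.exp_nat_mul]; congr 1; push_cast; ring

lemma ee_add (s t : ℝ) : ee (s + t) = ee s * ee t := by
  rw [ee, ee, ee, ← Complex.exp_add]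
  congr 1
  push_cast
  ring

lemma ee_zero : ee 0 = 1 := by simp [ee]

lemma ee_int (n : ℤ) : ee n = 1 := by
  rw [ee, Complex.exp_eq_one_iff]
  exact ⟨n, by push_cast; ring⟩

lemma conj_ee (t : ℝ) : (starRingEnd ℂ) (ee t) = ee (-t) := by
  rw [ee, ee, ← Complex.exp_conj]
  congr 1
  rw [map_mul, Complex.conj_I, Complex.conj_ofReal]
  push_cast
  ring

lemma dz_nonneg (t : ℝ) : 0 ≤ dz t := abs_nonneg _

lemma dz_le_half (t : ℝ) : dz t ≤ 1 / 2 := abs_sub_round t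

lemma dz_le_abs_sub_int (t : ℝ) (n : ℤ) : dz t ≤ |t - n| := by
  rcases eq_or_ne n (round t) with rfl | h
  · exact le_of_eq rfl
  · have h1 : (1 : ℝ) ≤ |(n : ℝ) - round t| := by
      rw [← Int.cast_sub, ← Int.cast_abs]
      exact_mod_cast Int.one_le_abs (sub_ne_zero.mpr h)
    have h2 : |t - round t| ≤ 1 / 2 := abs_sub_round t
    have : (1 : ℝ) ≤ |t - round t| + |t - n| := by
      calc (1:ℝ) ≤ |(n:ℝ) - round t| := h1
      _ ≤ |(n:ℝ) - t| + |t - round t| := abs_sub_le _ _ _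
      _ = |t - round t| + |t - n| := by rw [abs_sub_comm (n:ℝ) t]; ring
    unfold dz; linarith

lemma norm_one_sub_ee (t : ℝ) : ‖1 - ee t‖ = 2 * |Real.sin (π * t)| := by
  have hz : ee t = Complex.cos ((2 * π * t : ℝ) : ℂ) + Complex.sin ((2 * π * t : ℝ) : ℂ) * Complex.I := by
    rw [ee, Complex.exp_mul_I]
  have hsq : ‖1 - ee t‖ ^ 2 = (2 * |Real.sin (π * t)|) ^ 2 := by
    rw [Complex.sq_norm, hz, ← Complex.ofReal_cos, ← Complex.ofReal_sin,
      Complex.normSq_apply]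
    simp only [Complex.sub_re, Complex.one_re, Complex.add_re, Complex.ofReal_re,
      Complex.mul_re, Complex.I_re, Complex.I_im, Complex.ofReal_im, Complex.sub_im,
      Complex.one_im, Complex.add_im, Complex.mul_im]
    have h1 : Real.cos (2 * π * t) = 1 - 2 * Real.sin (π * t) ^ 2 := by
      have := Real.cos_two_mul (π * t)
      have hs := Real.sin_sq_add_cos_sq (π * t)
      rw [show 2 * π * t = 2 * (π * t) by ring, this]; nlinarith
    have h2 : Real.sin (π * t) ^ 2 = |Real.sin (π * t)| ^ 2 := (_root_.sq_abs _).symm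
    nlinarith [Real.sin_sq_add_cos_sq (2 * π * t)]
  have h1 := norm_nonneg (1 - ee t)
  have h2 : (0:ℝ) ≤ 2 * |Real.sin (π * t)| := by positivity
  nlinarith [hsq]

lemma jordan (u : ℝ) (h : |u| ≤ 1/2) : 2 * |u| ≤ |Real.sin (π * u)| := by
  rcases abs_le.mp h with ⟨h1, h2⟩
  rcases le_or_gt 0 u with hu | hu
  · rw [_root_.abs_of_nonneg hu, _root_.abs_of_nonneg (Real.sin_nonneg_of_nonneg_of_le_pi (by positivity)
      (by nlinarith [Real.pi_pos]))]
    have := Real.mul_le_sin (x := π * u) (by positivity) (by nlinarith [Real.pi_pos])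
    have hπ := Real.pi_pos
    calc 2 * u = 2 / π * (π * u) := by field_simp
    _ ≤ Real.sin (π * u) := this
  · have h' : |(-u)| ≤ 1/2 := by rwa [abs_neg]
    rw [← abs_neg u, ← abs_neg (Real.sin (π * u))]
    rw [← Real.sin_neg, ← mul_neg]
    rw [_root_.abs_of_nonneg (by linarith), _root_.abs_of_nonneg (Real.sin_nonneg_of_nonneg_of_le_pi
      (by nlinarith [Real.pi_pos]) (by nlinarith [Real.pi_pos]))]
    have := Real.mul_le_sin (x := π * (-u)) (by nlinarith [Real.pi_pos]) (by nlinarith [Real.pi_pos])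
    have hπ := Real.pi_pos
    calc 2 * (-u) = 2 / π * (π * (-u)) := by field_simp
    _ ≤ Real.sin (π * (-u)) := this

lemma four_dz_le (t : ℝ) : 4 * dz t ≤ ‖1 - ee t‖ := by
  rw [norm_one_sub_ee]
  have habs : |Real.sin (π * t)| = |Real.sin (π * (t - round t))| := by
    have : π * t = π * (t - round t) + (round t : ℝ) * π := by ring
    rw [this, Real.sin_add, Real.sin_int_mul_pi, mul_zero, add_zero,
      abs_mul, Real.abs_cos_int_mul_pi, mul_one]
  rw [habs]
  have := jordan (t - round t) (abs_sub_round t)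
  unfold dz; linarith

lemma ee_ne_one {t : ℝ} (h : 0 < dz t) : ee t ≠ 1 := by
  intro he
  have := four_dz_le t
  rw [he, sub_self, norm_zero] at this
  linarith

lemma geom_bound (t : ℝ) (h : 0 < dz t) (N : ℕ) :
    ‖∑ k ∈ range N, ee (k * t)‖ ≤ 1 / (2 * dz t) := by
  have hne := ee_ne_one h
  have : ∑ k ∈ range N, ee (k * t) = (ee t ^ N - 1) / (ee t - 1) := by
    simp_rw [ee_pow]; exact geom_sum_eq hne N
  rw [this, norm_div]
  have h1 : ‖ee t ^ N - 1‖ ≤ 2 := by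
    calc ‖ee t ^ N - 1‖ ≤ ‖ee t ^ N‖ + ‖(1:ℂ)‖ := norm_sub_le _ _
    _ = 2 := by rw [norm_pow, norm_ee]; norm_num
  have h2 : 4 * dz t ≤ ‖ee t - 1‖ := by rw [norm_sub_rev]; exact four_dz_le t
  have h3 : 0 < ‖ee t - 1‖ := lt_of_lt_of_le (by linarith) h2
  rw [div_le_div_iff₀ h3 (by linarith)]
  nlinarith


lemma continuous_ee : Continuous ee := by
  apply Complex.continuous_exp.comp
  fun_prop

def Fj (K : ℕ) (t : ℝ) : ℝ := ‖∑ j ∈ range K, ee (j * t)‖ ^ 2 / K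

lemma Fj_nonneg (K : ℕ) (t : ℝ) : 0 ≤ Fj K t := by unfold Fj; positivity

lemma continuous_Fj (K : ℕ) : Continuous (Fj K) := by
  unfold Fj
  apply Continuous.div_const
  apply Continuous.pow
  apply Continuous.norm
  exact continuous_finset_sum _ (fun j _ => continuous_ee.comp (by fun_prop))

lemma Fj_le (K : ℕ) (hK : 0 < K) {t : ℝ} (h : 0 < dz t) :
    Fj K t ≤ 1 / (4 * K * dz t ^ 2) := by
  have hg := geom_bound t h K
  have h4 : (0:ℝ) < 4 * (K:ℝ) * dz t ^ 2 := by positivity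
  have hd2 : (0:ℝ) < 2 * dz t := by linarith
  unfold Fj
  rw [div_le_div_iff₀ (by positivity) h4]
  have : ‖∑ j ∈ range K, ee (j * t)‖ ^ 2 ≤ (1 / (2 * dz t)) ^ 2 := by
    apply pow_le_pow_left₀ (norm_nonneg _) hg
  calc ‖∑ j ∈ range K, ee (j * t)‖ ^ 2 * (4 * (K:ℝ) * dz t ^ 2)
      ≤ (1 / (2 * dz t)) ^ 2 * (4 * (K:ℝ) * dz t ^ 2) := by
        apply mul_le_mul_of_nonneg_right this (le_of_lt h4)
    _ = 1 * (K:ℝ) := by field_simp; ring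

lemma Fj_eq (K : ℕ) (t : ℝ) :
    ((Fj K t : ℝ) : ℂ) = (K : ℂ)⁻¹ *
      ∑ p ∈ range K ×ˢ range K, ee ((((p.1 : ℤ) - p.2 : ℤ) : ℝ) * t) := by
  have hsq : ((‖∑ j ∈ range K, ee (j * t)‖ ^ 2 : ℝ) : ℂ)
      = (∑ j ∈ range K, ee (j * t)) * (starRingEnd ℂ) (∑ j ∈ range K, ee (j * t)) := by
    rw [Complex.mul_conj, Complex.normSq_eq_norm_sq]
  have hconj : (starRingEnd ℂ) (∑ j ∈ range K, ee (j * t)) = ∑ l ∈ range K, ee (-(l * t)) := by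
    rw [map_sum]
    exact Finset.sum_congr rfl fun l _ => conj_ee _
  unfold Fj
  rw [Complex.ofReal_div, hsq, hconj, Finset.sum_mul_sum]
  rw [div_eq_mul_inv, mul_comm, Complex.ofReal_natCast]
  congr 1
  rw [Finset.sum_product]
  apply Finset.sum_congr rfl
  intro j _
  apply Finset.sum_congr rfl
  intro l _
  rw [← ee_add]
  congr 1
  push_cast
  ring


def wc (γ : ℝ) (m : ℤ) : ℂ := ∫ u in (-(γ/2))..(γ/2), ee (m * u)
def qf (K : ℕ) (γ t : ℝ) : ℝ := ∫ s in (t - γ/2)..(t + γ/2), Fj K s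

lemma continuous_eem (m : ℤ) : Continuous (fun s : ℝ => ee (m * s)) :=
  continuous_ee.comp (by fun_prop)

lemma dz_sub_le (t s : ℝ) : dz t ≤ |t - s| + dz s := by
  have h := dz_le_abs_sub_int t (round s)
  have : |t - round s| ≤ |t - s| + |s - round s| := by
    calc |t - (round s : ℝ)| = |(t - s) + (s - round s)| := by ring_nf
    _ ≤ |t - s| + |s - round s| := abs_add_le _ _
  unfold dz at *; linarith

lemma int_ee_window (m : ℤ) (γ t : ℝ) :
    ∫ s in (t - γ/2)..(t + γ/2), ee (m * s) = ee (m * t) * wc γ m := by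
  have h := intervalIntegral.integral_comp_add_right (a := -(γ/2)) (b := γ/2)
    (fun s : ℝ => ee (m * s)) t
  have h2 : ∀ u : ℝ, ee (m * (u + t)) = ee (m * t) * ee (m * u) := by
    intro u
    rw [← ee_add]
    congr 1
    ring
  have h3 : (∫ u in (-(γ/2))..(γ/2), ee (m * (u + t)))
      = ee (m * t) * wc γ m := by
    simp_rw [h2]
    rw [intervalIntegral.integral_const_mul]
    rfl
  rw [← h3, h]
  congr 1 <;> ring

lemma wc_zero (γ : ℝ) : wc γ 0 = (γ : ℂ) := by
  unfold wc
  simp only [Int.cast_zero, zero_mul, ee_zero]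
  rw [intervalIntegral.integral_const]
  push_cast
  ring_nf
  simp

lemma norm_wc_le (m : ℤ) {γ : ℝ} (hγ : 0 ≤ γ) : ‖wc γ m‖ ≤ γ := by
  have h := intervalIntegral.norm_integral_le_of_norm_le_const (C := 1)
    (f := fun u : ℝ => ee (m * u)) (a := -(γ/2)) (b := γ/2)
    (fun x _ => le_of_eq (norm_ee _))
  calc ‖wc γ m‖ ≤ 1 * |γ/2 - (-(γ/2))| := h
  _ = γ := by rw [one_mul]; rw [show γ/2 - (-(γ/2)) = γ by ring, _root_.abs_of_nonneg hγ]

lemma int_ee_unit (m : ℤ) (a : ℝ) :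
    ∫ s in a..(a + 1), ee (m * s) = if m = 0 then 1 else 0 := by
  rcases eq_or_ne m 0 with rfl | hm
  · simp only [Int.cast_zero, zero_mul, ee_zero, if_pos rfl]
    rw [intervalIntegral.integral_const]
    simp
  · rw [if_neg hm]
    set c : ℂ := ((2 * π * (m : ℝ) : ℝ) : ℂ) * Complex.I with hc
    have hcne : c ≠ 0 := by
      apply mul_ne_zero _ Complex.I_ne_zero
      rw [Complex.ofReal_ne_zero]
      have : (m : ℝ) ≠ 0 := Int.cast_ne_zero.mpr hm
      have hπ := Real.pi_ne_zero
      positivity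
    have hee : ∀ s : ℝ, ee (m * s) = Complex.exp (c * s) := by
      intro s
      unfold ee
      congr 1
      rw [hc]
      push_cast
      ring
    simp_rw [hee]
    rw [integral_exp_mul_complex hcne]
    have : Complex.exp (c * (a + 1)) = Complex.exp (c * a) * Complex.exp c := by
      rw [← Complex.exp_add]; congr 1; ring
    have hec : Complex.exp c = 1 := by
      have h5 := ee_int m
      unfold ee at h5
      rw [hc]
      exact_mod_cast h5
    push_cast
    rw [this, hec, mul_one, sub_self, zero_div]

lemma Fj_unit (K : ℕ) (hK : 0 < K) (a : ℝ) :
    ∫ s in a..(a + 1), Fj K s = 1 := by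
  have hcast : ((∫ s in a..(a + 1), Fj K s : ℝ) : ℂ) = 1 := by
    rw [← intervalIntegral.integral_ofReal]
    calc (∫ s in a..(a+1), ((Fj K s : ℝ) : ℂ))
        = ∫ s in a..(a+1), (K : ℂ)⁻¹ *
            ∑ p ∈ range K ×ˢ range K, ee ((((p.1 : ℤ) - p.2 : ℤ) : ℝ) * s) := by
          apply intervalIntegral.integral_congr
          intro s _
          exact Fj_eq K s
      _ = (K : ℂ)⁻¹ * ∑ p ∈ range K ×ˢ range K,
            ∫ s in a..(a+1), ee ((((p.1 : ℤ) - p.2 : ℤ) : ℝ) * s) := by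
          rw [intervalIntegral.integral_const_mul]
          congr 1
          apply intervalIntegral.integral_finset_sum
          intro p _
          exact (continuous_eem _).intervalIntegrable _ _
      _ = (K : ℂ)⁻¹ * ∑ p ∈ range K ×ˢ range K,
            (if ((p.1 : ℤ) - p.2 : ℤ) = 0 then (1:ℂ) else 0) := by
          congr 1
          exact Finset.sum_congr rfl fun p _ => int_ee_unit _ a
      _ = (K : ℂ)⁻¹ * K := by
          congr 1
          rw [Finset.sum_product]
          have hrow : ∀ j ∈ range K, (∑ l ∈ range K,
              (if ((j : ℤ) - l : ℤ) = 0 then (1:ℂ) else 0)) = 1 := by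
            intro j hj
            have : ∀ l ∈ range K, (if ((j : ℤ) - l : ℤ) = 0 then (1:ℂ) else 0)
                = (if l = j then (1:ℂ) else 0) := by
              intro l _
              refine if_congr ?_ rfl rfl
              omega
            rw [Finset.sum_congr rfl this, Finset.sum_ite_eq' (range K) j (fun _ => (1:ℂ))]
            exact if_pos hj
          rw [Finset.sum_congr rfl hrow]
          simp
      _ = 1 := by
          rw [inv_mul_cancel₀]
          exact_mod_cast hK.ne'
  exact_mod_cast hcast


lemma qf_nonneg (K : ℕ) {γ : ℝ} (hγ : 0 ≤ γ) (t : ℝ) : 0 ≤ qf K γ t := by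
  apply intervalIntegral.integral_nonneg (by linarith)
  intro s _
  exact Fj_nonneg K s

lemma qf_le_one (K : ℕ) (hK : 0 < K) {γ : ℝ} (hγ : 0 ≤ γ) (hγ1 : γ ≤ 1) (t : ℝ) :
    qf K γ t ≤ 1 := by
  have h1 : qf K γ t ≤ ∫ s in (t - 1/2)..(t + 1/2), Fj K s := by
    apply intervalIntegral.integral_mono_interval (by linarith) (by linarith) (by linarith)
    · exact MeasureTheory.ae_of_all _ (fun s => Fj_nonneg K s)
    · exact (continuous_Fj K).intervalIntegrable _ _
  have h2 : (∫ s in (t - 1/2)..(t + 1/2), Fj K s) = 1 := by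
    have := Fj_unit K hK (t - 1/2)
    rw [show t - 1/2 + 1 = t + 1/2 by ring] at this
    exact this
  linarith

lemma qf_off (K : ℕ) (hK : 0 < K) {γ t : ℝ} (hγ : 0 < γ) (h : γ ≤ dz t) :
    qf K γ t ≤ 1 / (K * γ) := by
  have hbound : ∀ s ∈ Set.uIoc (t - γ/2) (t + γ/2), ‖Fj K s‖ ≤ 1 / (K * γ^2) := by
    intro s hs
    rw [Set.uIoc_of_le (by linarith)] at hs
    have hst : |t - s| ≤ γ/2 := by
      rw [abs_le]
      constructor <;> [linarith [hs.2]; linarith [hs.1]]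
    have hdzs : γ/2 ≤ dz s := by
      have := dz_sub_le t s
      linarith
    have hdzs0 : 0 < dz s := by linarith
    have h1 : Fj K s ≤ 1 / (4 * K * dz s ^ 2) := Fj_le K hK hdzs0
    have h2 : (1:ℝ) / (4 * K * dz s ^ 2) ≤ 1 / (K * γ^2) := by
      apply div_le_div_of_nonneg_left (by norm_num) (by positivity)
      have hKpos : (0:ℝ) < K := by exact_mod_cast hK
      have hsq : γ/2 * (γ/2) ≤ dz s * dz s := mul_self_le_mul_self (by linarith) hdzs
      nlinarith
    rw [Real.norm_eq_abs, _root_.abs_of_nonneg (Fj_nonneg K s)]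
    linarith
  have h3 := intervalIntegral.norm_integral_le_of_norm_le_const hbound
  have h4 : qf K γ t ≤ ‖∫ s in (t - γ/2)..(t + γ/2), Fj K s‖ := by
    rw [Real.norm_eq_abs]
    exact le_abs_self _
  calc qf K γ t ≤ 1 / (K * γ^2) * |t + γ/2 - (t - γ/2)| := le_trans h4 h3
  _ = 1 / (K * γ) := by
      rw [show t + γ/2 - (t - γ/2) = γ by ring, _root_.abs_of_nonneg hγ.le]
      have hKpos : (0:ℝ) < K := by exact_mod_cast hK
      field_simp

lemma qf_fourier (K : ℕ) (γ t : ℝ) :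
    ((qf K γ t : ℝ) : ℂ) = (K : ℂ)⁻¹ * ∑ p ∈ range K ×ˢ range K,
      wc γ ((p.1 : ℤ) - p.2) * ee ((((p.1 : ℤ) - p.2 : ℤ) : ℝ) * t) := by
  unfold qf
  rw [← intervalIntegral.integral_ofReal]
  calc (∫ s in (t - γ/2)..(t + γ/2), ((Fj K s : ℝ) : ℂ))
      = ∫ s in (t - γ/2)..(t + γ/2), (K : ℂ)⁻¹ *
          ∑ p ∈ range K ×ˢ range K, ee ((((p.1 : ℤ) - p.2 : ℤ) : ℝ) * s) := by
        apply intervalIntegral.integral_congr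
        intro s _
        exact Fj_eq K s
    _ = (K : ℂ)⁻¹ * ∑ p ∈ range K ×ˢ range K,
          ∫ s in (t - γ/2)..(t + γ/2), ee ((((p.1 : ℤ) - p.2 : ℤ) : ℝ) * s) := by
        rw [intervalIntegral.integral_const_mul]
        congr 1
        apply intervalIntegral.integral_finset_sum
        intro p _
        exact (continuous_eem _).intervalIntegrable _ _
    _ = (K : ℂ)⁻¹ * ∑ p ∈ range K ×ˢ range K,
          wc γ ((p.1 : ℤ) - p.2) * ee ((((p.1 : ℤ) - p.2 : ℤ) : ℝ) * t) := by
        congr 1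
        apply Finset.sum_congr rfl
        intro p _
        rw [int_ee_window]
        ring


lemma ee_sum {ι : Type*} (s : Finset ι) (x : ι → ℝ) :
    ∏ i ∈ s, ee (x i) = ee (∑ i ∈ s, x i) := by
  unfold ee
  rw [← Complex.exp_sum]
  congr 1
  rw [← Finset.sum_mul]
  congr 1
  push_cast
  rw [Finset.mul_sum]

variable {d : ℕ}

def mz (f : Fin d → ℕ × ℕ) (i : Fin d) : ℤ := ((f i).1 : ℤ) - ((f i).2 : ℤ)
def thz (α : Fin d → ℝ) (f : Fin d → ℕ × ℕ) : ℝ := ∑ i, ((mz f i : ℤ) : ℝ) * α i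
def uz (γ : ℝ) (c : Fin d → ℝ) (f : Fin d → ℕ × ℕ) : ℂ :=
  (∏ i, wc γ (mz f i)) * ee (∑ i, ((mz f i : ℤ) : ℝ) * c i)
def Gz (N : ℕ) (α : Fin d → ℝ) (f : Fin d → ℕ × ℕ) : ℂ :=
  ∑ k ∈ range N, ee ((k:ℝ) * thz α f)
def vz (γ : ℝ) (c α : Fin d → ℝ) (N : ℕ) (f : Fin d → ℕ × ℕ) : ℂ :=
  uz γ c f * Gz N α f

lemma key {d : ℕ} (hd : 0 < d) (α : Fin d → ℝ) {C τ : ℝ} (hC : 0 < C) (hτ : 0 < τ)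
    (hdioph : ∀ m : Fin d → ℤ, m ≠ 0 →
      C * ‖(fun i => (m i : ℝ))‖ ^ (-τ) ≤ dz (∑ i, (m i : ℝ) * α i))
    {γ : ℝ} (hγ : 0 < γ) (hγ1 : γ < 1) (c : Fin d → ℝ) :
    ∃ k : ℕ, k < (⌈2 * (⌈4/γ^(d+1)⌉₊:ℝ)^d * (⌈4/γ^(d+1)⌉₊:ℝ)^τ / C⌉₊ + 1) ∧
      ∀ i, dz ((k : ℝ) * α i + c i) < γ := by
  set K : ℕ := ⌈4/γ^(d+1)⌉₊ with hKdef
  set N : ℕ := ⌈2 * (K:ℝ)^d * (K:ℝ)^τ / C⌉₊ + 1 with hNdef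
  have hγp : (0:ℝ) < γ^(d+1) := by positivity
  have h4K : (4:ℝ)/γ^(d+1) ≤ K := Nat.le_ceil _
  have hKpos : 0 < K := Nat.ceil_pos.mpr (by positivity)
  have hKR : (0:ℝ) < K := by exact_mod_cast hKpos
  have hγd : (0:ℝ) < γ^d := by positivity
  -- 1/(K*γ) ≤ γ^d/4
  have hq : 1/((K:ℝ)*γ) ≤ γ^d/4 := by
    rw [div_le_div_iff₀ (by positivity) (by norm_num)]
    have h1 : (4:ℝ) ≤ K * γ^(d+1) := by
      have := (div_le_iff₀ hγp).mp h4K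
      linarith
    calc (1:ℝ) * 4 = 4 := by ring
    _ ≤ K * γ^(d+1) := h1
    _ = K * γ * γ^d := by rw [pow_succ]; ring
    _ = γ^d * (K * γ) := by ring
  have hNR : 2 * (K:ℝ)^d * (K:ℝ)^τ / C ≤ N := by
    calc 2 * (K:ℝ)^d * (K:ℝ)^τ / C ≤ ⌈2 * (K:ℝ)^d * (K:ℝ)^τ / C⌉₊ := Nat.le_ceil _
    _ ≤ N := by rw [hNdef]; push_cast; linarith
  have hNpos : 0 < N := by omega
  by_contra hmiss
  push_neg at hmiss
  have hmiss' : ∀ k : ℕ, k < N → ∃ i, γ ≤ dz ((k : ℝ) * α i + c i) := by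
    intro k hk
    obtain ⟨i, hi⟩ := hmiss k hk
    exact ⟨i, hi⟩
  set S : ℝ := ∑ k ∈ range N, ∏ i, qf K γ ((k:ℝ) * α i + c i) with hSdef
  -- upper bound
  have hupper : S ≤ N * (γ^d/4) := by
    rw [hSdef]
    have hterm : ∀ k ∈ range N, (∏ i, qf K γ ((k:ℝ) * α i + c i)) ≤ γ^d/4 := by
      intro k hk
      obtain ⟨i₀, hi₀⟩ := hmiss' k (mem_range.mp hk)
      calc ∏ i, qf K γ ((k:ℝ) * α i + c i)
          ≤ ∏ i, (if i = i₀ then 1/((K:ℝ)*γ) else 1) := by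
            apply Finset.prod_le_prod
            · intro i _; exact qf_nonneg K hγ.le _
            · intro i _
              by_cases h : i = i₀
              · rw [if_pos h, h]
                exact qf_off K hKpos hγ hi₀
              · rw [if_neg h]
                exact qf_le_one K hKpos hγ.le hγ1.le _
        _ = 1/((K:ℝ)*γ) := by
            rw [Finset.prod_ite_eq' Finset.univ i₀ (fun _ => 1/((K:ℝ)*γ))]
            exact if_pos (mem_univ _)
        _ ≤ γ^d/4 := hq
    calc S ≤ ∑ k ∈ range N, γ^d/4 := Finset.sum_le_sum hterm
    _ = N * (γ^d/4) := by rw [Finset.sum_const, card_range, nsmul_eq_mul]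
  -- lower bound setup
  classical
  set P : Finset (ℕ × ℕ) := range K ×ˢ range K with hPdef
  set F : Finset (Fin d → ℕ × ℕ) := Fintype.piFinset (fun _ => P) with hFdef
  have hKC : (K:ℂ) ≠ 0 := by exact_mod_cast hKR.ne'
  -- per-k expansion
  have hk : ∀ k : ℕ, ((∏ i, qf K γ ((k:ℝ) * α i + c i) : ℝ) : ℂ)
      = ((K:ℂ)⁻¹)^d * ∑ f ∈ F, uz γ c f * ee ((k:ℝ) * thz α f) := by
    intro k
    calc ((∏ i, qf K γ ((k:ℝ) * α i + c i) : ℝ) : ℂ)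
        = ∏ i, ((qf K γ ((k:ℝ) * α i + c i) : ℝ) : ℂ) := by push_cast; rfl
      _ = ∏ i, ((K:ℂ)⁻¹ * ∑ p ∈ P, wc γ ((p.1 : ℤ) - p.2) *
            ee ((((p.1 : ℤ) - p.2 : ℤ) : ℝ) * ((k:ℝ) * α i + c i))) := by
          exact Finset.prod_congr rfl fun i _ => qf_fourier K γ _
      _ = ((K:ℂ)⁻¹)^d * ∏ i, (∑ p ∈ P, wc γ ((p.1 : ℤ) - p.2) *
            ee ((((p.1 : ℤ) - p.2 : ℤ) : ℝ) * ((k:ℝ) * α i + c i))) := by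
          rw [Finset.prod_mul_distrib, Finset.prod_const, card_univ, Fintype.card_fin]
      _ = ((K:ℂ)⁻¹)^d * ∑ f ∈ F, ∏ i, (wc γ (mz f i) *
            ee (((mz f i : ℤ) : ℝ) * ((k:ℝ) * α i + c i))) := by
          rw [Finset.prod_univ_sum]
          simp only [mz]
          rfl
      _ = ((K:ℂ)⁻¹)^d * ∑ f ∈ F, uz γ c f * ee ((k:ℝ) * thz α f) := by
          congr 1
          apply Finset.sum_congr rfl
          intro f _
          rw [Finset.prod_mul_distrib, ee_sum]
          have harg : (∑ i, ((mz f i : ℤ) : ℝ) * ((k:ℝ) * α i + c i))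
              = (∑ i, ((mz f i : ℤ) : ℝ) * c i) + (k:ℝ) * thz α f := by
            rw [thz, Finset.mul_sum, ← Finset.sum_add_distrib]
            apply Finset.sum_congr rfl
            intro i _
            ring
          rw [harg, ee_add, uz]
          ring
  -- master identity
  have hS : ((S : ℝ) : ℂ) = ((K:ℂ)⁻¹)^d * ∑ f ∈ F, vz γ c α N f := by
    calc ((S : ℝ) : ℂ) = ∑ k ∈ range N, ((∏ i, qf K γ ((k:ℝ) * α i + c i) : ℝ) : ℂ) := by
          rw [hSdef]; push_cast; rfl
      _ = ∑ k ∈ range N, ((K:ℂ)⁻¹)^d * ∑ f ∈ F, uz γ c f * ee ((k:ℝ) * thz α f) := by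
          exact Finset.sum_congr rfl fun k _ => hk k
      _ = ((K:ℂ)⁻¹)^d * ∑ k ∈ range N, ∑ f ∈ F, uz γ c f * ee ((k:ℝ) * thz α f) := by
          rw [Finset.mul_sum]
      _ = ((K:ℂ)⁻¹)^d * ∑ f ∈ F, ∑ k ∈ range N, uz γ c f * ee ((k:ℝ) * thz α f) := by
          rw [Finset.sum_comm]
      _ = ((K:ℂ)⁻¹)^d * ∑ f ∈ F, vz γ c α N f := by
          congr 1
          apply Finset.sum_congr rfl
          intro f _
          rw [vz, Gz, Finset.mul_sum]
  -- diagonal value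
  have hdiagval : ∀ f : Fin d → ℕ × ℕ, mz f = 0 → vz γ c α N f = (γ:ℂ)^d * N := by
    intro f h0
    have h0i : ∀ i, mz f i = 0 := fun i => congrFun h0 i
    have hW : (∏ i, wc γ (mz f i)) = (γ:ℂ)^d := by
      calc ∏ i, wc γ (mz f i) = ∏ _i : Fin d, (γ:ℂ) :=
            Finset.prod_congr rfl fun i _ => by rw [h0i i, wc_zero]
        _ = (γ:ℂ)^d := by rw [Finset.prod_const, card_univ, Fintype.card_fin]
    have hc0 : (∑ i, ((mz f i : ℤ) : ℝ) * c i) = 0 :=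
      Finset.sum_eq_zero fun i _ => by rw [h0i i]; simp
    have hθ0 : thz α f = 0 := Finset.sum_eq_zero fun i _ => by rw [h0i i]; simp
    rw [vz, uz, Gz, hW, hc0, ee_zero, hθ0]
    simp only [mul_zero, ee_zero]
    rw [Finset.sum_const, card_range]
    simp [mul_comm]
  -- cardinality of the diagonal
  have hcard : (F.filter (fun f => mz f = 0)).card = K^d := by
    rw [Finset.card_filter]
    have hper : ∀ f : Fin d → ℕ × ℕ, (if mz f = 0 then (1:ℕ) else 0)
        = ∏ i, (if (f i).1 = (f i).2 then (1:ℕ) else 0) := by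
      intro f
      by_cases h : mz f = 0
      · rw [if_pos h]
        symm
        apply Finset.prod_eq_one
        intro i _
        have := congrFun h i
        simp only [mz, Pi.zero_apply] at this
        rw [if_pos (by omega)]
      · rw [if_neg h]
        obtain ⟨i, hi⟩ : ∃ i, mz f i ≠ 0 := by
          by_contra hh
          push_neg at hh
          exact h (funext hh)
        symm
        apply Finset.prod_eq_zero (mem_univ i)
        rw [if_neg]
        intro heq
        apply hi
        simp only [mz]
        omega
    rw [Finset.sum_congr rfl (fun f _ => hper f), hFdef,
      ← Finset.prod_univ_sum (fun _ : Fin d => P) (fun _ p => if p.1 = p.2 then (1:ℕ) else 0)]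
    have hinner : (∑ p ∈ P, if p.1 = p.2 then (1:ℕ) else 0) = K := by
      rw [hPdef, Finset.sum_product]
      have hrow : ∀ j ∈ range K, (∑ l ∈ range K, if j = l then (1:ℕ) else 0) = 1 := by
        intro j hj
        rw [Finset.sum_ite_eq (range K) j (fun _ => (1:ℕ))]
        exact if_pos hj
      rw [Finset.sum_congr rfl hrow]
      simp
    calc ∏ _i : Fin d, (∑ p ∈ P, if p.1 = p.2 then (1:ℕ) else 0)
        = ∏ _i : Fin d, K := Finset.prod_congr rfl fun i _ => hinner
      _ = K^d := by rw [Finset.prod_const, card_univ, Fintype.card_fin]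
  -- split the sum
  have hsplit : ∑ f ∈ F, vz γ c α N f
      = (K^d : ℕ) • ((γ:ℂ)^d * N) + ∑ f ∈ F.filter (fun f => ¬ mz f = 0), vz γ c α N f := by
    rw [← Finset.sum_filter_add_sum_filter_not F (fun f => mz f = 0)]
    congr 1
    rw [Finset.sum_congr rfl (fun f hf => hdiagval f (Finset.mem_filter.mp hf).2),
      Finset.sum_const, hcard]
  -- off-diagonal bound
  have hoff : ∀ f ∈ F.filter (fun f => ¬ mz f = 0),
      ‖vz γ c α N f‖ ≤ γ^d * ((K:ℝ)^τ / (2*C)) := by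
    intro f hf
    obtain ⟨hfF, hne⟩ := Finset.mem_filter.mp hf
    have hmb : ∀ i, |((mz f i : ℤ) : ℝ)| ≤ (K:ℝ) := by
      intro i
      have hP := Finset.mem_product.mp (Fintype.mem_piFinset.mp hfF i)
      have h1 : (f i).1 < K := mem_range.mp hP.1
      have h2 : (f i).2 < K := mem_range.mp hP.2
      have : |mz f i| ≤ (K:ℤ) := by rw [mz, abs_le]; omega
      rw [← Int.cast_abs]
      exact_mod_cast this
    have hnorm_le : ‖(fun i => ((mz f i : ℤ) : ℝ))‖ ≤ (K:ℝ) := by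
      apply pi_norm_le_iff_of_nonneg hKR.le |>.mpr
      intro i
      rw [Real.norm_eq_abs]
      exact hmb i
    have hnorm_ge : (1:ℝ) ≤ ‖(fun i => ((mz f i : ℤ) : ℝ))‖ := by
      obtain ⟨i, hi⟩ : ∃ i, mz f i ≠ 0 := by
        by_contra h
        push_neg at h
        exact hne (funext h)
      have h1 : (1:ℝ) ≤ |((mz f i : ℤ) : ℝ)| := by
        rw [← Int.cast_abs]
        exact_mod_cast Int.one_le_abs hi
      have h2 : |((mz f i : ℤ) : ℝ)| ≤ ‖(fun j => ((mz f j : ℤ) : ℝ))‖ := by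
        simpa using norm_le_pi_norm (fun j => ((mz f j : ℤ) : ℝ)) i
      linarith
    have hdθ : C * (K:ℝ)^(-τ) ≤ dz (thz α f) := by
      have h2 := hdioph (mz f) hne
      have h3 : (K:ℝ)^(-τ) ≤ ‖(fun i => ((mz f i : ℤ) : ℝ))‖^(-τ) := by
        rw [Real.rpow_neg (le_trans zero_le_one hnorm_ge), Real.rpow_neg hKR.le]
        apply inv_anti₀ (Real.rpow_pos_of_pos (lt_of_lt_of_le zero_lt_one hnorm_ge) τ)
        exact Real.rpow_le_rpow (le_trans zero_le_one hnorm_ge) hnorm_le hτ.le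
      calc C * (K:ℝ)^(-τ) ≤ C * ‖(fun i => ((mz f i : ℤ) : ℝ))‖^(-τ) :=
            mul_le_mul_of_nonneg_left h3 hC.le
        _ ≤ dz (∑ i, ((mz f i : ℤ) : ℝ) * α i) := h2
        _ = dz (thz α f) := rfl
    have hKτpos : (0:ℝ) < (K:ℝ)^(-τ) := Real.rpow_pos_of_pos hKR _
    have hdθpos : 0 < dz (thz α f) := lt_of_lt_of_le (by positivity) hdθ
    have hG : ‖Gz N α f‖ ≤ (K:ℝ)^τ / (2*C) := by
      calc ‖Gz N α f‖ ≤ 1/(2 * dz (thz α f)) := geom_bound _ hdθpos N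
        _ ≤ 1/(2 * (C * (K:ℝ)^(-τ))) := by
            apply one_div_le_one_div_of_le (by positivity)
            linarith
        _ = (K:ℝ)^τ/(2*C) := by
            rw [Real.rpow_neg hKR.le]
            have hKτ : (0:ℝ) < (K:ℝ)^τ := Real.rpow_pos_of_pos hKR _
            field_simp
    have hu : ‖uz γ c f‖ ≤ γ^d := by
      rw [uz, norm_mul, norm_ee, mul_one, norm_prod]
      calc ∏ i, ‖wc γ (mz f i)‖ ≤ ∏ _i : Fin d, γ :=
            Finset.prod_le_prod (fun i _ => norm_nonneg _) (fun i _ => norm_wc_le _ hγ.le)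
        _ = γ^d := by rw [Finset.prod_const, card_univ, Fintype.card_fin]
    calc ‖vz γ c α N f‖ = ‖uz γ c f‖ * ‖Gz N α f‖ := norm_mul _ _
      _ ≤ γ^d * ((K:ℝ)^τ/(2*C)) :=
          mul_le_mul hu hG (norm_nonneg _) hγd.le
  -- norm of off-diagonal sum
  have hcardF : F.card = (K*K)^d := by
    rw [hFdef, Fintype.card_piFinset]
    rw [hPdef, Finset.card_product, card_range]
    rw [Finset.prod_const, card_univ, Fintype.card_fin]
  have hoffsum : ‖∑ f ∈ F.filter (fun f => ¬ mz f = 0), vz γ c α N f‖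
      ≤ ((K*K)^d : ℕ) * (γ^d * ((K:ℝ)^τ / (2*C))) := by
    calc ‖∑ f ∈ F.filter (fun f => ¬ mz f = 0), vz γ c α N f‖
        ≤ ∑ f ∈ F.filter (fun f => ¬ mz f = 0), ‖vz γ c α N f‖ := norm_sum_le _ _
      _ ≤ ∑ _f ∈ F.filter (fun f => ¬ mz f = 0), γ^d * ((K:ℝ)^τ / (2*C)) :=
          Finset.sum_le_sum hoff
      _ = (F.filter (fun f => ¬ mz f = 0)).card * (γ^d * ((K:ℝ)^τ / (2*C))) := by
          rw [Finset.sum_const, nsmul_eq_mul]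
      _ ≤ ((K*K)^d : ℕ) * (γ^d * ((K:ℝ)^τ / (2*C))) := by
          apply mul_le_mul_of_nonneg_right _ (by positivity)
          have := Finset.card_filter_le F (fun f => ¬ mz f = 0)
          rw [hcardF] at this
          exact_mod_cast this
  -- assemble lower bound
  have hκK : ((K:ℂ)⁻¹)^d * ((K^d : ℕ) : ℂ) = 1 := by
    push_cast
    rw [← mul_pow, inv_mul_cancel₀ hKC, one_pow]
  have hSsub : ((S : ℝ) : ℂ) - ((γ^d * N : ℝ) : ℂ)
      = ((K:ℂ)⁻¹)^d * ∑ f ∈ F.filter (fun f => ¬ mz f = 0), vz γ c α N f := by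
    rw [hS, hsplit, mul_add, nsmul_eq_mul, ← mul_assoc, hκK, one_mul]
    push_cast
    ring
  have habs : |S - γ^d * N| ≤ ((K:ℝ)⁻¹)^d * (((K*K)^d : ℕ) * (γ^d * ((K:ℝ)^τ / (2*C)))) := by
    have h1 : |S - γ^d * N| = ‖((S : ℝ) : ℂ) - ((γ^d * N : ℝ) : ℂ)‖ := by
      rw [← Complex.ofReal_sub, Complex.norm_real, Real.norm_eq_abs]
    rw [h1, hSsub, norm_mul]
    apply mul_le_mul _ hoffsum (norm_nonneg _) (by positivity)
    rw [norm_pow, norm_inv, Complex.norm_natCast]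
  have hEbound : ((K:ℝ)⁻¹)^d * (((K*K)^d : ℕ) * (γ^d * ((K:ℝ)^τ / (2*C))))
      = (K:ℝ)^d * γ^d * (K:ℝ)^τ / (2*C) := by
    push_cast
    rw [mul_pow]
    field_simp
    ring
    rw [← mul_pow, mul_inv_cancel₀ hKR.ne', one_pow]
  have hNquarter : (K:ℝ)^d * γ^d * (K:ℝ)^τ / (2*C) ≤ γ^d * N / 4 := by
    have h1 : (K:ℝ)^d * (K:ℝ)^τ / (2*C) ≤ (N:ℝ)/4 := by
      have h2 : (2 * (K:ℝ)^d * (K:ℝ)^τ / C) / 4 ≤ (N:ℝ)/4 := by linarith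
      calc (K:ℝ)^d * (K:ℝ)^τ / (2*C) = (2 * (K:ℝ)^d * (K:ℝ)^τ / C)/4 := by
            field_simp
            ring
        _ ≤ (N:ℝ)/4 := h2
    calc (K:ℝ)^d * γ^d * (K:ℝ)^τ / (2*C) = γ^d * ((K:ℝ)^d * (K:ℝ)^τ / (2*C)) := by ring
      _ ≤ γ^d * ((N:ℝ)/4) := mul_le_mul_of_nonneg_left h1 hγd.le
      _ = γ^d * N / 4 := by ring
  have h3 : |S - γ^d * N| ≤ γ^d * N / 4 := by
    rw [hEbound] at habs
    linarith
  have h4 := (abs_le.mp h3).1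
  have hNγpos : 0 < γ^d * (N:ℝ) := by positivity
  linarith


lemma dz_norm (r : ℝ) : ‖((r : ℝ) : AddCircle (1:ℝ))‖ = dz r := by
  rw [AddCircle.norm_eq]
  simp [dz]

end Aux13

end Aux13sec

open Real

theorem stmt_13 {d : ℕ} (hd : 0 < d) (α : Fin d → ℝ)
    (hdio : ∃ C > (0 : ℝ), ∃ τ > (0 : ℝ), ∀ k : Fin d → ℤ, k ≠ 0 →
      C * ‖(fun i => (k i : ℝ))‖ ^ (-τ) ≤
        ‖((∑ i, (k i : ℝ) * α i : ℝ) : AddCircle (1 : ℝ))‖) :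
    ∃ C' > (0 : ℝ), ∀ γ : ℝ, 0 < γ → γ < 1 →
      ∀ x y : Fin d → AddCircle (1 : ℝ),
        ∃ k : ℕ, (k : ℝ) ≤ C' * γ ^ (-C') ∧
          dist (x + k • fun i => ((α i : ℝ) : AddCircle (1 : ℝ))) y < γ := by
  classical
  obtain ⟨C, hC, τ, hτ, hdio⟩ := hdio
  have hdioph : ∀ m : Fin d → ℤ, m ≠ 0 →
      C * ‖(fun i => (m i : ℝ))‖ ^ (-τ) ≤ Aux13.dz (∑ i, (m i : ℝ) * α i) := by
    intro m hm
    have := hdio m hm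
    rwa [Aux13.dz_norm] at this
  set B : ℝ := (d : ℝ) + τ with hB
  have hBpos : 0 < B := by positivity
  have h5B : (0:ℝ) < (5:ℝ) ^ B := Real.rpow_pos_of_pos (by norm_num) _
  set A : ℝ := 2 * (5:ℝ) ^ B / C + 1 with hA
  have hApos : 0 < A := by positivity
  set C' : ℝ := (A + 1) + ((d:ℝ) + 1) * B with hC'
  have hC'pos : 0 < C' := by positivity
  refine ⟨C', hC'pos, ?_⟩
  intro γ hγ hγ1 x y
  choose X hX using fun i => QuotientAddGroup.mk_surjective (x i)
  choose Y hY using fun i => QuotientAddGroup.mk_surjective (y i)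
  obtain ⟨k, hkN, hk⟩ := Aux13.key hd α hC hτ hdioph hγ hγ1 (fun i => X i - Y i)
  set K : ℕ := ⌈4/γ^(d+1)⌉₊ with hKdef
  refine ⟨k, ?_, ?_⟩
  · -- numeric bound
    have hγp : (0:ℝ) < γ^(d+1) := by positivity
    have hγ1p : γ^(d+1) ≤ 1 := pow_le_one₀ hγ.le hγ1.le
    have hinv1 : (1:ℝ) ≤ γ⁻¹ := (one_le_inv₀ hγ).mpr hγ1.le
    have hginv : (1:ℝ) ≤ (γ⁻¹)^(d+1) := one_le_pow₀ hinv1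
    have hKR : (0:ℝ) < K := by
      have : 0 < K := Nat.ceil_pos.mpr (by positivity)
      exact_mod_cast this
    have hK5 : (K:ℝ) ≤ 5 * (γ⁻¹)^(d+1) := by
      have h1 : (K:ℝ) < 4/γ^(d+1) + 1 := Nat.ceil_lt_add_one (by positivity)
      have h2 : 4/γ^(d+1) = 4 * (γ⁻¹)^(d+1) := by
        rw [div_eq_mul_inv, ← inv_pow]
      nlinarith
    have hkmono : (k:ℝ) ≤ 2 * (K:ℝ)^d * (K:ℝ)^τ / C + 1 := by
      have h1 : k ≤ ⌈2 * (K:ℝ)^d * (K:ℝ)^τ / C⌉₊ := by omega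
      have h2 : (⌈2 * (K:ℝ)^d * (K:ℝ)^τ / C⌉₊ : ℝ) < 2 * (K:ℝ)^d * (K:ℝ)^τ / C + 1 :=
        Nat.ceil_lt_add_one (by positivity)
      have h3 : (k:ℝ) ≤ (⌈2 * (K:ℝ)^d * (K:ℝ)^τ / C⌉₊ : ℝ) := by exact_mod_cast h1
      linarith
    have hKB : (K:ℝ)^d * (K:ℝ)^τ = (K:ℝ) ^ B := by
      rw [hB, Real.rpow_add hKR, Real.rpow_natCast]
    have hgB : (K:ℝ) ^ B ≤ (5:ℝ)^B * (γ⁻¹) ^ (((d:ℝ)+1) * B) := by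
      calc (K:ℝ) ^ B ≤ (5 * (γ⁻¹)^(d+1)) ^ B :=
        Real.rpow_le_rpow hKR.le hK5 hBpos.le
      _ = (5:ℝ)^B * ((γ⁻¹)^(d+1):ℝ)^B := Real.mul_rpow (by norm_num) (by positivity)
      _ = (5:ℝ)^B * (γ⁻¹) ^ (((d:ℝ)+1) * B) := by
          rw [← Real.rpow_natCast (γ⁻¹) (d+1), ← Real.rpow_mul (by positivity)]
          congr 2
          push_cast
          ring
    have hgB1 : (1:ℝ) ≤ (γ⁻¹) ^ (((d:ℝ)+1) * B) :=
      Real.one_le_rpow hinv1 (by positivity)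
    have hbound : (k:ℝ) ≤ A * (γ⁻¹) ^ (((d:ℝ)+1) * B) := by
      have := mul_le_mul_of_nonneg_left hgB (by positivity : (0:ℝ) ≤ 2 / C)
      calc (k:ℝ) ≤ 2 * (K:ℝ)^d * (K:ℝ)^τ / C + 1 := hkmono
      _ = (2/C) * ((K:ℝ)^B) + 1 := by rw [← hKB]; ring
      _ ≤ (2/C) * ((5:ℝ)^B * (γ⁻¹) ^ (((d:ℝ)+1) * B)) + 1 := by
          have h6 := mul_le_mul_of_nonneg_left hgB (by positivity : (0:ℝ) ≤ 2 / C)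
          linarith
      _ = (2 * (5:ℝ)^B / C) * (γ⁻¹) ^ (((d:ℝ)+1) * B) + 1 := by ring
      _ ≤ (2 * (5:ℝ)^B / C) * (γ⁻¹) ^ (((d:ℝ)+1) * B) + 1 * (γ⁻¹) ^ (((d:ℝ)+1) * B) := by
          nlinarith
      _ = A * (γ⁻¹) ^ (((d:ℝ)+1) * B) := by rw [hA]; ring
    have hgneg : (γ⁻¹) ^ (((d:ℝ)+1) * B) = γ ^ (-(((d:ℝ)+1) * B)) := by
      rw [Real.inv_rpow hγ.le, ← Real.rpow_neg hγ.le]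
    have hexp : γ ^ (-(((d:ℝ)+1) * B)) ≤ γ ^ (-C') := by
      apply Real.rpow_le_rpow_of_exponent_ge hγ hγ1.le
      rw [hC']
      nlinarith
    calc (k:ℝ) ≤ A * (γ⁻¹) ^ (((d:ℝ)+1) * B) := hbound
    _ = A * γ ^ (-(((d:ℝ)+1) * B)) := by rw [hgneg]
    _ ≤ C' * γ ^ (-C') := by
        apply mul_le_mul ?_ hexp (by positivity) hC'pos.le
        rw [hC']
        nlinarith
  · -- distance
    rw [dist_pi_lt_iff hγ]
    intro i
    have hcoord : (x + k • fun j => ((α j : ℝ) : AddCircle (1:ℝ))) i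
        = ((X i + (k:ℝ) * α i : ℝ) : AddCircle (1:ℝ)) := by
      show x i + k • ((α i : ℝ) : AddCircle (1:ℝ)) = _
      rw [← hX i, ← AddCircle.coe_nsmul, ← AddCircle.coe_add]
      congr 1
      rw [nsmul_eq_mul]
    rw [hcoord, ← hY i, dist_eq_norm, ← AddCircle.coe_sub, Aux13.dz_norm]
    have := hk i
    have harg : X i + (k:ℝ) * α i - Y i = (k:ℝ) * α i + (X i - Y i) := by ring
    rw [harg]
    exact this
end

section
/- Let T be an interval exchange transformation on I = [0,1) exchanging r intervals with irreducible permutation, satisfying the infinite distinct orbit condition, and let the natural coding assign a distinct symbol to each of the r intervals. Then the complexity function of the resulting subshift satisfies p(n) = (r-1)n + 1 for all n ≥ 1. -/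
open Finset

theorem stmt_16 (r : ℕ) (hr : 2 ≤ r) (perm : Equiv.Perm (Fin r))
    -- the permutation is irreducible: no proper initial segment is invariant
    (hirr : ∀ k : ℕ, k + 1 < r → ¬ ∀ i : Fin r, (i : ℕ) ≤ k → ((perm i : Fin r) : ℕ) ≤ k)
    (lam : Fin r → ℝ) (hpos : ∀ j, 0 < lam j) (hsum : ∑ j, lam j = 1)
    -- left endpoints of the exchanged intervals, before and after applying `perm`
    (l l' : Fin r → ℝ)
    (hl : ∀ j, l j = ∑ i ∈ Finset.univ.filter (fun i => i < j), lam i)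
    (hl' : ∀ j, l' j = ∑ i ∈ Finset.univ.filter (fun i => perm i < perm j), lam i)
    -- `S` is the interval exchange transformation `T_{π,λ}` on `I = [0,1)`,
    -- as a bijection of `I` (so that `S ^ n` makes sense for all `n ∈ ℤ`)
    (S : Equiv.Perm (Set.Ico (0 : ℝ) 1))
    (hS : ∀ (x : Set.Ico (0 : ℝ) 1) (j : Fin r),
      (x : ℝ) ∈ Set.Ico (l j) (l j + lam j) → ((S x : Set.Ico (0 : ℝ) 1) : ℝ) = x + (l' j - l j))
    -- the natural coding: `code x = j` iff `x` lies in the `j`-th interval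
    (code : Set.Ico (0 : ℝ) 1 → Fin r)
    (hcode : ∀ (x : Set.Ico (0 : ℝ) 1) (j : Fin r),
      code x = j ↔ (x : ℝ) ∈ Set.Ico (l j) (l j + lam j))
    -- IDOC (Keane's infinite distinct orbit condition): the orbits of the
    -- discontinuity points are infinite and pairwise distinct
    (hidoc : ∀ j j' : Fin r, (j : ℕ) ≠ 0 → (j' : ℕ) ≠ 0 →
      ∀ p p' : Set.Ico (0 : ℝ) 1, (p : ℝ) = l j → (p' : ℝ) = l j' →
        ∀ m : ℤ, 1 ≤ m → (S ^ m) p ≠ p') :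
    ∀ n : ℕ, 1 ≤ n →
      {w : Fin n → Fin r | ∃ (x : Set.Ico (0 : ℝ) 1) (i : ℤ),
          ∀ m : Fin n, w m = code ((S ^ (i + (m : ℤ))) x)}.ncard
        = (r - 1) * n + 1 := by
  intro n hn
  haveI : NeZero r := ⟨by omega⟩
  -- basic facts about l
  have hl_nonneg : ∀ j, 0 ≤ l j := by
    intro j; rw [hl]; exact Finset.sum_nonneg fun i _ => (hpos i).le
  have hl_insert : ∀ j : Fin r,
      l j + lam j = ∑ i ∈ insert j (Finset.univ.filter (fun i => i < j)), lam i := by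
    intro j
    rw [Finset.sum_insert (by simp), hl, add_comm]
  have hl_add : ∀ j j' : Fin r, j < j' → l j + lam j ≤ l j' := by
    intro j j' hjj
    rw [hl_insert, hl j']
    apply Finset.sum_le_sum_of_subset_of_nonneg
    · intro i hi
      simp only [Finset.mem_insert, Finset.mem_filter, Finset.mem_univ, true_and] at hi ⊢
      rcases hi with rfl | hi
      · exact hjj
      · exact lt_trans hi hjj
    · exact fun i _ _ => (hpos i).le
  have hl_add_le_one : ∀ j : Fin r, l j + lam j ≤ 1 := by
    intro j
    rw [hl_insert, ← hsum]
    exact Finset.sum_le_sum_of_subset_of_nonneg (Finset.subset_univ _)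
      (fun i _ _ => (hpos i).le)
  have hl_lt_one : ∀ j, l j < 1 := fun j => by have := hl_add_le_one j; have := hpos j; linarith
  have hl_mono : ∀ j j' : Fin r, j ≤ j' → l j ≤ l j' := by
    intro j j' h
    rw [hl, hl]
    apply Finset.sum_le_sum_of_subset_of_nonneg
    · intro i hi
      simp only [Finset.mem_filter, Finset.mem_univ, true_and] at hi ⊢
      exact lt_of_lt_of_le hi h
    · exact fun i _ _ => (hpos i).le
  have hl_succ : ∀ (j : Fin r) (h : (j : ℕ) + 1 < r), l ⟨(j : ℕ) + 1, h⟩ = l j + lam j := by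
    intro j h
    rw [hl_insert, hl]
    congr 1
    ext i
    simp only [Finset.mem_filter, Finset.mem_univ, true_and, Finset.mem_insert, Fin.lt_def]
    constructor
    · intro hi
      rcases Nat.lt_succ_iff_lt_or_eq.mp hi with h1 | h1
      · exact Or.inr h1
      · exact Or.inl (Fin.ext h1)
    · rintro (rfl | hi)
      · omega
      · omega
  have hl_last : ∀ j : Fin r, (j : ℕ) + 1 = r → l j + lam j = 1 := by
    intro j h
    rw [hl_insert, ← hsum]
    congr 1
    apply Finset.eq_univ_of_forall
    intro i
    simp only [Finset.mem_insert, Finset.mem_filter, Finset.mem_univ, true_and, Fin.lt_def]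
    have := i.isLt
    rcases Nat.lt_or_ge (i : ℕ) (j : ℕ) with h1 | h1
    · exact Or.inr h1
    · exact Or.inl (Fin.ext (by omega))
  -- the left endpoints as elements of I
  have hlmem : ∀ j : Fin r, l j ∈ Set.Ico (0:ℝ) 1 := fun j =>
    Set.mem_Ico.mpr ⟨hl_nonneg j, hl_lt_one j⟩
  set lp : Fin r → (Set.Ico (0:ℝ) 1) := fun j => ⟨l j, hlmem j⟩ with hlp
  have hmemc : ∀ x : (Set.Ico (0:ℝ) 1),
      (x : ℝ) ∈ Set.Ico (l (code x)) (l (code x) + lam (code x)) := fun x =>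
    (hcode x (code x)).mp rfl
  -- translation lemma
  have htrans : ∀ (k : ℕ) (x y : (Set.Ico (0:ℝ) 1)), (x : ℝ) ≤ y →
      (∀ m, m < k → code ((S ^ m) x) = code ((S ^ m) y)) →
      ∀ z : (Set.Ico (0:ℝ) 1), (x : ℝ) ≤ z → (z : ℝ) ≤ y →
        (((S ^ k) z : (Set.Ico (0:ℝ) 1)) : ℝ) = z + ((((S ^ k) x : (Set.Ico (0:ℝ) 1)) : ℝ) - x) := by
    intro k
    induction k with
    | zero => intro x y _ _ z _ _; simp
    | succ k ih =>
      intro x y hxy hcodes z hxz hzy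
      have hm : ∀ m, m < k → code ((S ^ m) x) = code ((S ^ m) y) :=
        fun m hm => hcodes m (by omega)
      have hz := ih x y hxy hm z hxz hzy
      have hyy := ih x y hxy hm y hxy le_rfl
      set j := code ((S ^ k) x) with hj
      have hx1 := hmemc ((S ^ k) x)
      rw [← hj] at hx1
      have hy1 : ((( S ^ k) y : (Set.Ico (0:ℝ) 1)) : ℝ) ∈ Set.Ico (l j) (l j + lam j) := by
        have hck := hcodes k (by omega)
        exact (hcode _ j).mp (by rw [← hck])
      have hz1 : (((S ^ k) z : (Set.Ico (0:ℝ) 1)) : ℝ) ∈ Set.Ico (l j) (l j + lam j) := by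
        constructor
        · rw [hz]; linarith [hx1.1]
        · rw [hz]; have := hy1.2; rw [hyy] at this; linarith
      have e1 := hS ((S ^ k) z) j hz1
      have e2 := hS ((S ^ k) x) j hx1
      rw [pow_succ', Equiv.Perm.mul_apply, Equiv.Perm.mul_apply, e1, e2, hz]
      ring
  -- cut points
  set cut : ℕ → Fin r → (Set.Ico (0:ℝ) 1) := fun k j => (S ^ (-(k : ℤ))) (lp j) with hcutdef
  have hcut : ∀ (k : ℕ) (j : Fin r), (S ^ (k : ℤ)) (cut k j) = lp j := by
    intro k j
    rw [hcutdef]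
    simp only
    rw [← Equiv.Perm.mul_apply, ← zpow_add, add_neg_cancel, zpow_zero, Equiv.Perm.one_apply]
  have hcutN : ∀ (k : ℕ) (j : Fin r), (S ^ k) (cut k j) = lp j := by
    intro k j
    have := hcut k j
    rwa [zpow_natCast] at this
  have hl_inj : ∀ j j' : Fin r, l j = l j' → j = j' := by
    intro j j' h
    by_contra hne
    rcases lt_or_gt_of_ne hne with h1 | h1
    · have := hl_add j j' h1; have := hpos j; linarith
    · have := hl_add j' j h1; have := hpos j'; linarith
  have hcut_ne : ∀ (k k' : ℕ) (j j' : Fin r), (j : ℕ) ≠ 0 → (j' : ℕ) ≠ 0 → k < k' →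
      cut k j ≠ cut k' j' := by
    intro k k' j j' hj hj' hkk heq
    have h1 : (S ^ ((k' : ℤ) - k)) ((S ^ (k : ℤ)) (cut k j)) = lp j' := by
      rw [← Equiv.Perm.mul_apply, ← zpow_add, sub_add_cancel, heq, hcut]
    rw [hcut k j] at h1
    exact hidoc j j' hj hj' (lp j) (lp j') rfl rfl ((k' : ℤ) - k) (by omega) h1
  set D : Finset (Set.Ico (0:ℝ) 1) :=
    (Finset.range n ×ˢ Finset.univ.filter fun j : Fin r => (j : ℕ) ≠ 0).image
      (fun p => cut p.1 p.2) with hD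
  have hDmem : ∀ d, d ∈ D ↔ ∃ k < n, ∃ j : Fin r, (j : ℕ) ≠ 0 ∧ cut k j = d := by
    intro d
    rw [hD, Finset.mem_image]
    constructor
    · rintro ⟨⟨k, j⟩, hm, rfl⟩
      simp only [Finset.mem_product, Finset.mem_range, Finset.mem_filter, Finset.mem_univ,
        true_and] at hm
      exact ⟨k, hm.1, j, hm.2, rfl⟩
    · rintro ⟨k, hk, j, hj, rfl⟩
      exact ⟨(k, j), by simp [Finset.mem_product, hk]; rintro rfl; exact hj (by simp), rfl⟩
  have hD_card : D.card = (r - 1) * n := by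
    rw [hD, Finset.card_image_of_injOn, Finset.card_product, Finset.card_range]
    · have : (Finset.univ.filter fun j : Fin r => (j : ℕ) ≠ 0).card = r - 1 := by
        have h0 : (Finset.univ.filter fun j : Fin r => (j : ℕ) ≠ 0) =
            Finset.univ.erase (0 : Fin r) := by
          ext j
          simp
        rw [h0, Finset.card_erase_of_mem (Finset.mem_univ _), Finset.card_univ,
          Fintype.card_fin]
      rw [this]; ring
    · rintro ⟨k, j⟩ hm ⟨k', j'⟩ hm' heq
      simp only [Finset.coe_product, Set.mem_prod, Finset.mem_coe, Finset.mem_range,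
        Finset.coe_filter, Set.mem_setOf_eq, Finset.mem_univ, true_and] at hm hm'
      simp only at heq
      rcases lt_trichotomy k k' with h1 | h1 | h1
      · exact absurd heq (hcut_ne k k' j j' hm.2 hm'.2 h1)
      · subst h1
        have : lp j = lp j' := by rw [← hcutN k j, ← hcutN k j', heq]
        have : l j = l j' := congrArg Subtype.val this
        exact Prod.ext rfl (hl_inj _ _ this)
      · exact absurd heq.symm (hcut_ne k' k j' j hm'.2 hm.2 h1)
  -- zero is not a cut point
  set x0 : (Set.Ico (0:ℝ) 1) := ⟨0, Set.mem_Ico.mpr ⟨le_refl 0, by norm_num⟩⟩ with hx0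
  set j0 : Fin r := perm.symm 0 with hj0
  have hpj0 : perm j0 = 0 := perm.apply_symm_apply 0
  have hj0ne : (j0 : ℕ) ≠ 0 := by
    intro h
    apply hirr 0 (by omega)
    intro i hi
    have hiz : i = j0 := Fin.ext (by omega)
    rw [hiz, hpj0]
    rfl
  have hSj0 : S (lp j0) = x0 := by
    have h1 : (↑(S (lp j0)) : ℝ) = l j0 + (l' j0 - l j0) :=
      hS (lp j0) j0 ⟨le_refl _, by have := hpos j0; simp only [hlp]; linarith⟩
    have h2 : l' j0 = 0 := by
      rw [hl']
      have : (Finset.univ.filter fun i => perm i < perm j0) = ∅ := by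
        apply Finset.filter_eq_empty_iff.mpr
        intro i _
        rw [hpj0]
        simp [Fin.lt_def]
      rw [this, Finset.sum_empty]
    apply Subtype.ext
    rw [h1, h2, hx0]
    ring
  have hcut_pos : ∀ d ∈ D, (0 : ℝ) < d := by
    intro d hd
    obtain ⟨k, hk, j, hj, rfl⟩ := (hDmem d).mp hd
    rcases lt_or_ge (0:ℝ) (cut k j : ℝ) with h | h
    · exact h
    · exfalso
      have hdz : cut k j = x0 := Subtype.ext (le_antisymm h (cut k j).2.1)
      have h1 : (S ^ ((k : ℤ) + 1)) (lp j0) = lp j := by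
        rw [zpow_add_one, Equiv.Perm.mul_apply, hSj0, ← hdz, hcut]
      exact hidoc j0 j hj0ne hj (lp j0) (lp j) rfl rfl ((k : ℤ) + 1) (by omega) h1
  -- the separation lemma
  have hsep : ∀ x y : (Set.Ico (0:ℝ) 1), (x : ℝ) ≤ y →
      ((∀ m, m < n → code ((S ^ m) x) = code ((S ^ m) y)) ↔
        ∀ d ∈ D, ¬((x : ℝ) < d ∧ (d : ℝ) ≤ y)) := by
    intro x y hxy
    constructor
    · rintro hcodes d hd ⟨hxd, hdy⟩
      obtain ⟨k, hk, j, hj, rfl⟩ := (hDmem d).mp hd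
      have hc : ∀ m, m < k → code ((S ^ m) x) = code ((S ^ m) y) :=
        fun m hm => hcodes m (by omega)
      have hdtr := htrans k x y hxy hc (cut k j) hxd.le hdy
      have hytr := htrans k x y hxy hc y hxy le_rfl
      have hlj : (((S ^ k) (cut k j) : (Set.Ico (0:ℝ) 1)) : ℝ) = l j :=
        congrArg Subtype.val (hcutN k j)
      rw [hlj] at hdtr
      set j₁ := code ((S ^ k) x) with hj₁
      have hx1 := hmemc ((S ^ k) x)
      rw [← hj₁] at hx1
      have hy1 : (((S ^ k) y : (Set.Ico (0:ℝ) 1)) : ℝ) ∈ Set.Ico (l j₁) (l j₁ + lam j₁) :=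
        (hcode _ j₁).mp (by rw [← hcodes k hk])
      have hjj : j₁ < j := by
        by_contra hcon
        push_neg at hcon
        have := hl_mono j j₁ hcon
        have := hx1.1
        linarith
      have := hl_add j₁ j hjj
      have := hy1.2
      rw [hytr] at this
      linarith
    · intro hnosep
      have main : ∀ k, k ≤ n → ∀ m, m < k → code ((S ^ m) x) = code ((S ^ m) y) := by
        intro k
        induction k with
        | zero => intro _ m hm; omega
        | succ k ih =>
          intro hk1 m hm
          have hc := ih (by omega)
          rcases Nat.lt_or_ge m k with h | h
          · exact hc m h
          · have hmk : m = k := by omega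
            subst hmk
            have hytr := htrans m x y hxy hc y hxy le_rfl
            set j := code ((S ^ m) x) with hj
            have hx1 := hmemc ((S ^ m) x)
            rw [← hj] at hx1
            symm
            rw [hcode]
            constructor
            · rw [hytr]
              have := hx1.1
              linarith
            · by_contra hcon
              push_neg at hcon
              have hylt : (((S ^ m) y : (Set.Ico (0:ℝ) 1)) : ℝ) < 1 := ((S ^ m) y).2.2
              have hlt1 : l j + lam j < 1 := lt_of_le_of_lt hcon hylt
              have hjr : (j : ℕ) + 1 < r := by
                by_contra hh
                have h2 : (j : ℕ) + 1 = r := by have := j.isLt; omega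
                have := hl_last j h2
                linarith
              have hlj₁ : l ⟨(j : ℕ) + 1, hjr⟩ = l j + lam j := hl_succ j hjr
              set j₁ : Fin r := ⟨(j : ℕ) + 1, hjr⟩ with hj₁d
              set c : ℝ := (((S ^ m) x : (Set.Ico (0:ℝ) 1)) : ℝ) - x with hcc
              have hxz : (x : ℝ) < l j₁ - c := by
                have := hx1.2
                rw [hlj₁]
                simp only [hcc]
                linarith
              have hzy : l j₁ - c ≤ y := by
                rw [hytr] at hcon
                rw [hlj₁]
                simp only [hcc]
                linarith
              have hzI : l j₁ - c ∈ Set.Ico (0:ℝ) 1 :=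
                ⟨le_trans x.2.1 hxz.le, lt_of_le_of_lt hzy y.2.2⟩
              set z : (Set.Ico (0:ℝ) 1) := ⟨l j₁ - c, hzI⟩ with hzd
              have hztr := htrans m x y hxy hc z hxz.le hzy
              have hSz : (S ^ m) z = lp j₁ := by
                apply Subtype.ext
                rw [hztr]
                show l j₁ - c + ((((S ^ m) x : (Set.Ico (0:ℝ) 1)) : ℝ) - x) = l j₁
                rw [hcc]
                ring
              have hzcut : cut m j₁ = z := by
                apply Equiv.injective (S ^ (m : ℤ))
                rw [hcut, zpow_natCast, hSz]
              have hzD : z ∈ D := (hDmem z).mpr ⟨m, by omega, j₁, Nat.succ_ne_zero _, hzcut⟩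
              exact hnosep z hzD ⟨hxz, hzy⟩
      exact main n le_rfl
  -- the coding map and the counting function
  set g : (Set.Ico (0:ℝ) 1) → (Fin n → Fin r) := fun x m => code ((S ^ (m : ℕ)) x) with hg
  set cf : (Set.Ico (0:ℝ) 1) → ℕ := fun x => (D.filter fun d : (Set.Ico (0:ℝ) 1) => (d : ℝ) ≤ x).card with hcf
  have hgc0 : ∀ x y : (Set.Ico (0:ℝ) 1), (x : ℝ) ≤ y → (g x = g y ↔ cf x = cf y) := by
    intro x y hxy
    have h1 : g x = g y ↔ ∀ m, m < n → code ((S ^ m) x) = code ((S ^ m) y) := by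
      constructor
      · intro h m hm
        exact congrFun h ⟨m, hm⟩
      · intro h
        funext m
        exact h m m.isLt
    rw [h1, hsep x y hxy]
    constructor
    · intro h
      have heqs : D.filter (fun d : (Set.Ico (0:ℝ) 1) => (d : ℝ) ≤ x) = D.filter (fun d : (Set.Ico (0:ℝ) 1) => (d : ℝ) ≤ y) := by
        ext d
        simp only [Finset.mem_filter, and_congr_right_iff]
        intro hd
        constructor
        · intro h2; exact le_trans h2 hxy
        · intro h2
          by_contra h3
          push_neg at h3
          exact h d hd ⟨h3, h2⟩
      rw [hcf]
      simp only
      rw [heqs]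
    · rintro h d hd ⟨hxd, hdy⟩
      have hsub : D.filter (fun d : (Set.Ico (0:ℝ) 1) => (d : ℝ) ≤ x) ⊆ D.filter (fun d : (Set.Ico (0:ℝ) 1) => (d : ℝ) ≤ y) :=
        Finset.monotone_filter_right D (fun a _ ha => le_trans ha hxy)
      have heqs := Finset.eq_of_subset_of_card_le hsub (le_of_eq h.symm)
      have hdm : d ∈ D.filter (fun d : (Set.Ico (0:ℝ) 1) => (d : ℝ) ≤ y) := Finset.mem_filter.mpr ⟨hd, hdy⟩
      rw [← heqs] at hdm
      exact absurd (Finset.mem_filter.mp hdm).2 (not_le.mpr hxd)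
  have hgc : ∀ x y, g x = g y ↔ cf x = cf y := by
    intro x y
    rcases le_total (x : ℝ) (y : ℝ) with h | h
    · exact hgc0 x y h
    · rw [eq_comm, hgc0 y x h, eq_comm]
  have hcfx0 : cf x0 = 0 := by
    rw [hcf]
    simp only
    rw [Finset.card_eq_zero, Finset.filter_eq_empty_iff]
    intro d hd hle
    have hpos' := hcut_pos d hd
    have hle' : (d : ℝ) ≤ 0 := hle
    linarith
  have hx0notD : x0 ∉ D := by
    intro h
    have := hcut_pos x0 h
    have h0 : (x0 : ℝ) = 0 := rfl
    linarith
  have hcf_mono : ∀ a b : (Set.Ico (0:ℝ) 1), b ∈ D → (a : ℝ) < b → cf a < cf b := by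
    intro a b hb hab
    apply Finset.card_lt_card
    rw [Finset.ssubset_iff_of_subset
      (Finset.monotone_filter_right D (fun e _ he => le_trans he hab.le))]
    exact ⟨b, Finset.mem_filter.mpr ⟨hb, le_rfl⟩, fun hc =>
      absurd (Finset.mem_filter.mp hc).2 (not_le.mpr hab)⟩
  have hcf_injD : Set.InjOn cf ↑D := by
    intro a ha b hb hab
    rcases lt_trichotomy (a : ℝ) (b : ℝ) with h | h | h
    · exact absurd hab (Nat.ne_of_lt (hcf_mono a b hb h))
    · exact Subtype.ext h
    · exact absurd hab.symm (Nat.ne_of_lt (hcf_mono b a ha h))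
  have himg : D.image cf = Finset.Icc 1 D.card := by
    apply Finset.eq_of_subset_of_card_le
    · intro m hm
      obtain ⟨d, hd, rfl⟩ := Finset.mem_image.mp hm
      rw [Finset.mem_Icc]
      refine ⟨?_, Finset.card_filter_le _ _⟩
      exact Finset.card_pos.mpr ⟨d, Finset.mem_filter.mpr ⟨hd, le_rfl⟩⟩
    · rw [Finset.card_image_of_injOn hcf_injD, Nat.card_Icc]
      omega
  have hrange : Set.range g = g '' ↑(insert x0 D) := by
    apply Set.Subset.antisymm
    · rintro w ⟨x, rfl⟩
      rcases Nat.eq_zero_or_pos (cf x) with h | h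
      · exact ⟨x0, by simp, (hgc x0 x).mpr (by rw [hcfx0, h])⟩
      · have hle : cf x ≤ D.card := Finset.card_filter_le _ _
        have hmm : cf x ∈ Finset.Icc 1 D.card := Finset.mem_Icc.mpr ⟨h, hle⟩
        rw [← himg] at hmm
        obtain ⟨d, hd, hcd⟩ := Finset.mem_image.mp hmm
        exact ⟨d, by simp [hd], (hgc d x).mpr hcd⟩
    · rintro w ⟨x, _, rfl⟩
      exact ⟨x, rfl⟩
  have hginj : Set.InjOn g ↑(insert x0 D) := by
    intro a ha b hb hab
    simp only [Finset.coe_insert, Set.mem_insert_iff, Finset.mem_coe] at ha hb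
    have hcfab := (hgc a b).mp hab
    rcases ha with rfl | ha
    · rcases hb with rfl | hb
      · rfl
      · exfalso
        have h1 : 1 ≤ cf b :=
          Finset.card_pos.mpr ⟨b, Finset.mem_filter.mpr ⟨hb, le_rfl⟩⟩
        rw [← hcfab, hcfx0] at h1
        omega
    · rcases hb with rfl | hb
      · exfalso
        have h1 : 1 ≤ cf a :=
          Finset.card_pos.mpr ⟨a, Finset.mem_filter.mpr ⟨ha, le_rfl⟩⟩
        rw [hcfab, hcfx0] at h1
        omega
      · exact hcf_injD ha hb hcfab
  have hW : {w : Fin n → Fin r | ∃ (x : Set.Ico (0 : ℝ) 1) (i : ℤ),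
      ∀ m : Fin n, w m = code ((S ^ (i + (m : ℤ))) x)} = Set.range g := by
    ext w
    simp only [Set.mem_setOf_eq, Set.mem_range]
    constructor
    · rintro ⟨x, i, hw⟩
      refine ⟨(S ^ i) x, ?_⟩
      funext m
      rw [hw m]
      have heq : (S ^ (i + (m : ℤ))) x = (S ^ ((m : ℕ))) ((S ^ i) x) := by
        rw [add_comm, zpow_add, Equiv.Perm.mul_apply, zpow_natCast]
      rw [heq]
    · rintro ⟨x, rfl⟩
      refine ⟨x, 0, fun m => ?_⟩
      have heq : (S ^ ((0 : ℤ) + (m : ℤ))) x = (S ^ ((m : ℕ))) x := by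
        rw [zero_add, zpow_natCast]
      rw [heq]
  rw [hW, hrange, Set.ncard_image_of_injOn hginj, Set.ncard_coe_finset,
    Finset.card_insert_of_notMem hx0notD, hD_card]
end
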